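/- Let Y be a closed subspace of a Banach space X such that for all x ∈ X, ‖x‖ = d(x, Y) + d(0, P_Y(x)). Then Y has the 1½-ball property. -/
import Mathlib


/-- If `Y` is a closed (proximinal) subspace of a Banach space `X` such that
`‖x‖ = d(x, Y) + d(0, P_Y(x))` for all `x ∈ X`, then `Y` has the 1½-ball property. -/
theorem stmt_3 {X : Type*} [NormedAddCommGroup X] [NormedSpace ℝ X] [CompleteSpace X]
    (Y : Subspace ℝ X) (hYcl : IsClosed (Y : Set X))
    (hprox : ∀ x : X, {z : X | z ∈ Y ∧ ‖x - z‖ = Metric.infDist x (Y : Set X)}.Nonempty)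
    (hid : ∀ x : X, ‖x‖ = Metric.infDist x (Y : Set X) +
      Metric.infDist (0 : X) {z : X | z ∈ Y ∧ ‖x - z‖ = Metric.infDist x (Y : Set X)}) :
    ∀ (x y : X) (r s : ℝ), 0 < r → 0 < s → y ∈ Y → ‖x - y‖ < r + s →
      (Metric.closedBall x r ∩ (Y : Set X)).Nonempty →
      (Metric.closedBall x r ∩ Metric.closedBall y s ∩ (Y : Set X)).Nonempty := by
  rintro x y r s hr hs hy hxy ⟨z, hzball, hzY⟩
  set x' := x - y with hx'
  set d := Metric.infDist x' (Y : Set X) with hd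
  have hdr : d ≤ r := by
    have hz' : z - y ∈ (Y : Set X) := Y.sub_mem hzY hy
    have hdz : dist x' (z - y) ≤ r := by
      rw [dist_eq_norm]
      have he : x' - (z - y) = -(z - x) := by rw [hx']; abel
      rw [he, norm_neg, ← dist_eq_norm]
      exact Metric.mem_closedBall.mp hzball
    exact le_trans (Metric.infDist_le_dist_of_mem hz') hdz
  have hP := hprox x'
  have hlt : Metric.infDist (0 : X)
      {z : X | z ∈ Y ∧ ‖x' - z‖ = Metric.infDist x' (Y : Set X)} < r + s - d := by
    have := hid x'
    linarith
  obtain ⟨w, hwP, hw⟩ := (Metric.infDist_lt_iff hP).mp hlt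
  obtain ⟨hwY, hwd⟩ := hwP
  rw [dist_zero_left] at hw
  by_cases hws : ‖w‖ ≤ s
  · refine ⟨w + y, ⟨?_, ?_⟩, Y.add_mem hwY hy⟩
    · rw [Metric.mem_closedBall, dist_eq_norm']
      have : x - (w + y) = x' - w := by rw [hx']; abel
      rw [this, hwd]; exact hdr
    · rw [Metric.mem_closedBall, dist_eq_norm']
      simpa using hws
  · push_neg at hws
    have hwpos : 0 < ‖w‖ := lt_trans hs hws
    set w' := (s / ‖w‖) • w with hw'
    have hw'Y : w' ∈ Y := Y.smul_mem _ hwY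
    have hnw' : ‖w'‖ = s := by
      rw [hw', norm_smul, Real.norm_eq_abs, abs_of_pos (div_pos hs hwpos),
        div_mul_cancel₀ _ (ne_of_gt hwpos)]
    have hww' : ‖w - w'‖ = ‖w‖ - s := by
      have : w - w' = (1 - s / ‖w‖) • w := by
        rw [hw', sub_smul, one_smul]
      rw [this, norm_smul, Real.norm_eq_abs,
        abs_of_nonneg (by rw [sub_nonneg]; exact (div_le_one hwpos).mpr hws.le),
        sub_mul, one_mul, div_mul_cancel₀ _ (ne_of_gt hwpos)]
    refine ⟨w' + y, ⟨?_, ?_⟩, Y.add_mem hw'Y hy⟩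
    · rw [Metric.mem_closedBall, dist_eq_norm']
      have h1 : x - (w' + y) = (x' - w) + (w - w') := by rw [hx']; abel
      calc ‖x - (w' + y)‖ ≤ ‖x' - w‖ + ‖w - w'‖ := h1 ▸ norm_add_le _ _
        _ = d + (‖w‖ - s) := by rw [hwd, hww']
        _ ≤ r := by linarith
    · rw [Metric.mem_closedBall, dist_eq_norm']
      have : y - (w' + y) = -w' := by abel
      rw [this, norm_neg, hnw']
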